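/- For all ρ > 0, μ > 0, κ > 0, if p* is an optimal solution of the dual problem (a minimizer of θ over ℝ^m) and p_DS* is the unique minimizer of θ_{ρ,μ,κ}, then for every p ∈ ℝ^m it holds θ(p) − θ(p*) ≤ ρ D_f + μ D_g + (κ/2)‖p*‖² + (θ_{ρ,μ}(p) − θ_{ρ,μ}(p_DS*)). -/

import Mathlib

open scoped RealInnerProductSpace
noncomputable section

/-- `Euc k` is the Euclidean space `ℝ^k`. -/
abbrev Euc (k : ℕ) := EuclideanSpace ℝ (Fin k)

/-- `f` is proper: nowhere `-∞` and somewhere finite. -/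
def IsProperFn {k : ℕ} (f : Euc k → EReal) : Prop :=
  (∀ x, f x ≠ ⊥) ∧ ∃ x, f x ≠ ⊤

/-- Convexity of an extended-real-valued function. -/
def IsConvexFn {k : ℕ} (f : Euc k → EReal) : Prop :=
  ∀ x y : Euc k, ∀ t : ℝ, 0 < t → t < 1 →
    f (t • x + (1 - t) • y) ≤ (t : EReal) * f x + ((1 - t : ℝ) : EReal) * f y

/-- `f` is proper, convex, lower semicontinuous with bounded effective domain. -/
def NiceFn {k : ℕ} (f : Euc k → EReal) : Prop :=
  IsProperFn f ∧ IsConvexFn f ∧ LowerSemicontinuous f ∧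
    Bornology.IsBounded {x | f x ≠ ⊤}

/-- The Fenchel conjugate `f*(q) = sup_x {⟨q,x⟩ - f(x)}` (real-valued). -/
noncomputable def conjFn {k : ℕ} (f : Euc k → EReal) (q : Euc k) : ℝ :=
  (⨆ x, ((⟪q, x⟫ : ℝ) : EReal) - f x).toReal

/-- The Fenchel conjugate as an extended real. -/
noncomputable def conjE {k : ℕ} (f : Euc k → EReal) (q : Euc k) : EReal :=
  ⨆ x, ((⟪q, x⟫ : ℝ) : EReal) - f x

/-- The smoothed conjugate `f_r*(q) = sup_x {⟨q,x⟩ - f(x) - (r/2)‖x‖²}`. -/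
noncomputable def conjSm {k : ℕ} (f : Euc k → EReal) (r : ℝ) (q : Euc k) : ℝ :=
  (⨆ x, ((⟪q, x⟫ - r / 2 * ‖x‖ ^ 2 : ℝ) : EReal) - f x).toReal

/-- The proximal objective `x ↦ f(x) + (r/2)‖u - x‖²`. -/
noncomputable def proxObj {k : ℕ} (f : Euc k → EReal) (r : ℝ) (u x : Euc k) : EReal :=
  f x + ((r / 2 * ‖u - x‖ ^ 2 : ℝ) : EReal)

/-- `D_f = sup {‖x‖²/2 : x ∈ dom f}`. -/
noncomputable def Dsup {k : ℕ} (f : Euc k → EReal) : ℝ :=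
  sSup ((fun x : Euc k => ‖x‖ ^ 2 / 2) '' {x | f x ≠ ⊤})

/-- `x0` is the unique global minimizer of `h`. -/
def UniqMin {α : Type*} {β : Type*} [Preorder β] (h : α → β) (x0 : α) : Prop :=
  (∀ x, h x0 ≤ h x) ∧ ∀ x, (∀ y, h x ≤ h y) → x = x0

/-- The dual objective `θ(p) = f*(A*p) + g*(-p)`. -/
noncomputable def theta {n m : ℕ} (f : Euc n → EReal) (g : Euc m → EReal)
    (A : Euc n →L[ℝ] Euc m) (p : Euc m) : ℝ :=
  conjFn f (ContinuousLinearMap.adjoint A p) + conjFn g (-p)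

/-- The singly smoothed dual objective `θ_{ρ,μ}(p) = f_ρ*(A*p) + g_μ*(-p)`. -/
noncomputable def thetaSm {n m : ℕ} (f : Euc n → EReal) (g : Euc m → EReal)
    (A : Euc n →L[ℝ] Euc m) (r s : ℝ) (p : Euc m) : ℝ :=
  conjSm f r (ContinuousLinearMap.adjoint A p) + conjSm g s (-p)

/-- The doubly smoothed dual objective `θ_{ρ,μ,κ}(p) = θ_{ρ,μ}(p) + (κ/2)‖p‖²`. -/
noncomputable def thetaSmK {n m : ℕ} (f : Euc n → EReal) (g : Euc m → EReal)
    (A : Euc n →L[ℝ] Euc m) (r s c : ℝ) (p : Euc m) : ℝ :=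
  thetaSm f g A r s p + c / 2 * ‖p‖ ^ 2

/-- The optimal value of the primal problem `v(P) = inf {f(x) + g(Ax)}`. -/
noncomputable def vPrimal {n m : ℕ} (f : Euc n → EReal) (g : Euc m → EReal)
    (A : Euc n →L[ℝ] Euc m) : EReal := ⨅ x, f x + g (A x)

/-- The optimal value of the dual problem `v(D) = -inf θ`. -/
noncomputable def vDual {n m : ℕ} (f : Euc n → EReal) (g : Euc m → EReal)
    (A : Euc n →L[ℝ] Euc m) : ℝ := -(⨅ p, theta f g A p)

/-- For every `p`: `θ(p) - θ(p*) ≤ ρ D_f + μ D_g + (κ/2)‖p*‖² + (θ_{ρ,μ}(p) - θ_{ρ,μ}(p_DS*))`. -/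

lemma aux_lb {k : ℕ} (f : Euc k → EReal) (hf : NiceFn f) :
    ∃ b : ℝ, ∀ x, f x ≠ ⊤ → (b : EReal) ≤ f x := by
  obtain ⟨⟨hbot, x₀, hx₀⟩, _, hlsc, hbdd⟩ := hf
  set K := closure {x | f x ≠ ⊤} with hK
  have hKc : IsCompact K := hbdd.isCompact_closure
  have hUopen : ∀ n : ℕ, IsOpen (f ⁻¹' Set.Ioi ((-(n:ℝ) : ℝ) : EReal)) := fun n =>
    hlsc.isOpen_preimage _
  have hcover : K ⊆ ⋃ n : ℕ, f ⁻¹' Set.Ioi ((-(n:ℝ) : ℝ) : EReal) := by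
    intro x _
    simp only [Set.mem_iUnion, Set.mem_preimage, Set.mem_Ioi]
    by_cases htop : f x = ⊤
    · exact ⟨0, by simp [htop]⟩
    · obtain ⟨n, hn⟩ := exists_nat_gt (-(f x).toReal)
      refine ⟨n, ?_⟩
      rw [← EReal.coe_toReal htop (hbot x)]
      exact_mod_cast neg_lt.mp hn
  obtain ⟨t, ht⟩ := hKc.elim_finite_subcover _ hUopen hcover
  refine ⟨-((t.sup id : ℕ) : ℝ), fun x hx => ?_⟩
  have hxK : x ∈ K := subset_closure hx
  have := ht hxK
  simp only [Set.mem_iUnion, Set.mem_preimage, Set.mem_Ioi, exists_prop] at this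
  obtain ⟨n, hn, hmem⟩ := this
  have h2 : ((-((t.sup id : ℕ) : ℝ)) : EReal) ≤ ((-(n : ℝ)) : EReal) := by
    apply EReal.coe_le_coe_iff.mpr
    exact neg_le_neg (Nat.cast_le.mpr (Finset.le_sup (f := id) hn))
  exact le_of_lt (lt_of_le_of_lt h2 hmem)

lemma aux_domR {k : ℕ} (f : Euc k → EReal) (hf : NiceFn f) :
    ∃ R : ℝ, 0 ≤ R ∧ ∀ x, f x ≠ ⊤ → ‖x‖ ≤ R := by
  obtain ⟨r, hr⟩ := hf.2.2.2.subset_closedBall (0 : Euc k)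
  refine ⟨max r 0, le_max_right _ _, fun x hx => ?_⟩
  have := hr hx
  rw [Metric.mem_closedBall, dist_zero_right] at this
  exact this.trans (le_max_left _ _)

lemma aux_Dsup_ge {k : ℕ} (f : Euc k → EReal) (hf : NiceFn f) :
    ∀ x, f x ≠ ⊤ → ‖x‖ ^ 2 / 2 ≤ Dsup f := by
  obtain ⟨R, hR0, hR⟩ := aux_domR f hf
  intro x hx
  apply le_csSup
  · refine ⟨R ^ 2 / 2, ?_⟩
    rintro _ ⟨y, hy, rfl⟩
    have := hR y hy
    nlinarith [norm_nonneg y]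
  · exact ⟨x, hx, rfl⟩

lemma aux_sup_finite {k : ℕ} (f : Euc k → EReal) (hf : NiceFn f) (φ : Euc k → ℝ)
    (hC : ∃ C, ∀ x, f x ≠ ⊤ → φ x ≤ C) :
    (⨆ x, ((φ x : ℝ) : EReal) - f x) ≠ ⊥ ∧ (⨆ x, ((φ x : ℝ) : EReal) - f x) ≠ ⊤ := by
  obtain ⟨b, hb⟩ := aux_lb f hf
  obtain ⟨C, hCb⟩ := hC
  obtain ⟨⟨hbot, x₀, hx₀⟩, -, -, -⟩ := hf
  constructor
  · have h1 : ((φ x₀ - (f x₀).toReal : ℝ) : EReal) ≤ ⨆ x, ((φ x : ℝ) : EReal) - f x := by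
      refine le_trans (le_of_eq ?_) (le_iSup _ x₀)
      rw [EReal.coe_sub, EReal.coe_toReal hx₀ (hbot x₀)]
    exact fun h => EReal.coe_ne_bot _ (le_bot_iff.mp (h ▸ h1))
  · have h2 : (⨆ x, ((φ x : ℝ) : EReal) - f x) ≤ ((C - b : ℝ) : EReal) := by
      refine iSup_le fun x => ?_
      by_cases htop : f x = ⊤
      · simp [htop]
      · rw [← EReal.coe_toReal htop (hbot x), ← EReal.coe_sub, EReal.coe_le_coe_iff]
        have hbx : b ≤ (f x).toReal := by
          have := hb x htop
          rw [← EReal.coe_toReal htop (hbot x), EReal.coe_le_coe_iff] at this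
          exact this
        have := hCb x htop
        linarith
    exact fun h => EReal.coe_ne_top _ (top_le_iff.mp (h ▸ h2))

lemma aux_conj_bounds {k : ℕ} (f : Euc k → EReal) (hf : NiceFn f) {r : ℝ} (hr : 0 ≤ r)
    (q : Euc k) :
    conjSm f r q ≤ conjFn f q ∧ conjFn f q ≤ conjSm f r q + r * Dsup f := by
  obtain ⟨R, hR0, hR⟩ := aux_domR f hf
  have hbot := hf.1.1
  have hE := aux_sup_finite f hf (fun x => (⟪q, x⟫ : ℝ))
    ⟨‖q‖ * R, fun x hx => (real_inner_le_norm q x).trans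
      (mul_le_mul_of_nonneg_left (hR x hx) (norm_nonneg q))⟩
  have hS := aux_sup_finite f hf (fun x => (⟪q, x⟫ - r / 2 * ‖x‖ ^ 2 : ℝ))
    ⟨‖q‖ * R, fun x hx => by
      have h1 : (⟪q, x⟫ : ℝ) ≤ ‖q‖ * R := (real_inner_le_norm q x).trans
        (mul_le_mul_of_nonneg_left (hR x hx) (norm_nonneg q))
      nlinarith [norm_nonneg x, sq_nonneg (‖x‖)]⟩
  set E : EReal := ⨆ x, ((⟪q, x⟫ : ℝ) : EReal) - f x with hEdef
  set S : EReal := ⨆ x, ((⟪q, x⟫ - r / 2 * ‖x‖ ^ 2 : ℝ) : EReal) - f x with hSdef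
  have hSE : S ≤ E := by
    refine iSup_mono fun x => EReal.sub_le_sub ?_ le_rfl
    apply EReal.coe_le_coe_iff.mpr
    nlinarith [sq_nonneg (‖x‖)]
  have hED : E ≤ ((S.toReal + r * Dsup f : ℝ) : EReal) := by
    refine iSup_le fun x => ?_
    by_cases htop : f x = ⊤
    · simp [htop]
    · rw [← EReal.coe_toReal htop (hbot x), ← EReal.coe_sub, EReal.coe_le_coe_iff]
      have hSx : ((⟪q, x⟫ - r / 2 * ‖x‖ ^ 2 - (f x).toReal : ℝ) : EReal) ≤ S := by
        refine le_trans (le_of_eq ?_) (le_iSup _ x)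
        rw [EReal.coe_sub, EReal.coe_toReal htop (hbot x)]
      have hSx' : (⟪q, x⟫ - r / 2 * ‖x‖ ^ 2 - (f x).toReal : ℝ) ≤ S.toReal := by
        have h := EReal.toReal_le_toReal hSx (EReal.coe_ne_bot _) hS.2
        rwa [EReal.toReal_coe] at h
      have hD := aux_Dsup_ge f hf x htop
      have : r / 2 * ‖x‖ ^ 2 ≤ r * Dsup f := by
        have := mul_le_mul_of_nonneg_left hD hr
        linarith
      linarith
  constructor
  · exact EReal.toReal_le_toReal hSE hS.1 hE.2
  · have := EReal.toReal_le_toReal hED hE.1 (EReal.coe_ne_top _)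
    rw [EReal.toReal_coe] at this
    exact this

theorem stmt11 (n m : ℕ) (f : Euc n → EReal) (g : Euc m → EReal)
    (A : Euc n →L[ℝ] Euc m) (hf : NiceFn f) (hg : NiceFn g)
    (ρ μ κ : ℝ) (hρ : 0 < ρ) (hμ : 0 < μ) (hκ : 0 < κ)
    (pstar : Euc m) (hpstar : ∀ p, theta f g A pstar ≤ theta f g A p)
    (pDS : Euc m) (hpDS : UniqMin (thetaSmK f g A ρ μ κ) pDS) :
    ∀ p : Euc m,
      theta f g A p - theta f g A pstar
        ≤ ρ * Dsup f + μ * Dsup g + κ / 2 * ‖pstar‖ ^ 2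
          + (thetaSm f g A ρ μ p - thetaSm f g A ρ μ pDS) := by
  intro p
  have hfρ := fun q => aux_conj_bounds f hf hρ.le q
  have hgμ := fun q => aux_conj_bounds g hg hμ.le q
  have h1 : theta f g A p ≤ thetaSm f g A ρ μ p + (ρ * Dsup f + μ * Dsup g) := by
    have ha := (hfρ (ContinuousLinearMap.adjoint A p)).2
    have hb := (hgμ (-p)).2
    unfold theta thetaSm
    linarith
  have h2 : thetaSm f g A ρ μ pstar ≤ theta f g A pstar := by
    have ha := (hfρ (ContinuousLinearMap.adjoint A pstar)).1
    have hb := (hgμ (-pstar)).1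
    unfold theta thetaSm
    linarith
  have h3 : thetaSm f g A ρ μ pDS ≤ thetaSm f g A ρ μ pstar + κ / 2 * ‖pstar‖ ^ 2 := by
    have := hpDS.1 pstar
    unfold thetaSmK at this
    have hnn : 0 ≤ κ / 2 * ‖pDS‖ ^ 2 := by positivity
    linarith
  linarith
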